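/- Let X ∈ Sⁿ be positive semidefinite with rank(X) = r, and suppose its leading k×k block equals I_k (so necessarily k ≤ r). Then there exists R̂ ∈ ℝ^{n×r} whose first k rows equal I_{k,r} := [I_k, 0_{k×(r−k)}] such that X = R̂R̂ᵀ. -/

import Mathlib

open Matrix Submodule Module Finset
open scoped MatrixOrder

noncomputable section

def Ikr (k r : ℕ) : Matrix (Fin k) (Fin r) ℝ :=
  Matrix.of fun i j => if (i : ℕ) = (j : ℕ) then (1 : ℝ) else 0

/-- `R̂ = [I_{k,r}; R]`. -/
def Rhat {nk r : ℕ} (k : ℕ) (R : Matrix (Fin nk) (Fin r) ℝ) :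
    Matrix (Fin k ⊕ Fin nk) (Fin r) ℝ :=
  Matrix.of fun i j => Sum.elim (fun a => Ikr k r a j) (fun b => R b j) i

/-- factorization claim of Section 1.3 of the paper: a positive semidefinite
matrix `X` of rank `r` whose leading `k×k` block is the identity can be factorized as
`X = R̂R̂ᵀ` where the first `k` rows of `R̂ ∈ ℝ^{n×r}` are `I_{k,r} = [I_k, 0]`.
The dimension `n` is encoded as `Fin k ⊕ Fin nk` with `nk = n − k`. -/
theorem stmt14 {k nk r : ℕ}
    (X : Matrix (Fin k ⊕ Fin nk) (Fin k ⊕ Fin nk) ℝ)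
    (hX : X.PosSemidef) (hrank : X.rank = r)
    (hblock : X.submatrix Sum.inl Sum.inl = 1) :
    ∃ R : Matrix (Fin nk) (Fin r) ℝ, X = Rhat k R * (Rhat k R)ᵀ := by
  classical
  set A : Matrix (Fin k ⊕ Fin nk) (Fin k ⊕ Fin nk) ℝ := CFC.sqrt X with hA
  have hAt : Aᵀ = A := by
    rw [← conjTranspose_eq_transpose_of_trivial]
    exact (Matrix.nonneg_iff_posSemidef.mp (CFC.sqrt_nonneg X)).1
  have hAAt : A * Aᵀ = X := by rw [hAt]; exact CFC.sqrt_mul_sqrt_self X (Matrix.nonneg_iff_posSemidef.mpr hX)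
  -- the rows of A as vectors in Euclidean space
  let vE : (Fin k ⊕ Fin nk) → EuclideanSpace ℝ (Fin k ⊕ Fin nk) :=
    fun i => (WithLp.equiv 2 ((Fin k ⊕ Fin nk) → ℝ)).symm (A i)
  have hinner : ∀ i j, (inner ℝ (vE i) (vE j) : ℝ) = X i j := by
    intro i j
    rw [PiLp.inner_apply]
    simp only [RCLike.inner_apply, starRingEnd_apply, star_trivial]
    rw [← hAAt, Matrix.mul_apply]
    simp [vE, Matrix.transpose_apply, mul_comm]
  set W : Submodule ℝ (EuclideanSpace ℝ (Fin k ⊕ Fin nk)) :=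
    Submodule.span ℝ (Set.range vE) with hW
  have hWrank : finrank ℝ W = r := by
    let e := (EuclideanSpace.equiv (Fin k ⊕ Fin nk) ℝ).toLinearEquiv
    have hmap : W.map (e : _ →ₗ[ℝ] ((Fin k ⊕ Fin nk) → ℝ)) =
        Submodule.span ℝ (Set.range A) := by
      rw [hW, Submodule.map_span]
      congr 1
      rw [← Set.range_comp]
      have : ((e : _ →ₗ[ℝ] ((Fin k ⊕ Fin nk) → ℝ)) : _ → _) ∘ vE = A := by funext i; rfl
      rw [this]
    have h1 : finrank ℝ (W.map (e : _ →ₗ[ℝ] ((Fin k ⊕ Fin nk) → ℝ))) = finrank ℝ W :=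
      LinearEquiv.finrank_map_eq e W
    rw [hmap] at h1
    rw [← h1, show Set.range A = Set.range A.row from rfl, ← Matrix.rank_eq_finrank_span_row]
    rw [← hrank, ← hAAt, Matrix.rank_self_mul_transpose]
  let w : (Fin k ⊕ Fin nk) → W := fun i => ⟨vE i, Submodule.subset_span (Set.mem_range_self i)⟩
  have hinnerW : ∀ i j, (inner ℝ (w i) (w j) : ℝ) = X i j := fun i j => hinner i j
  -- the first k rows are orthonormal
  have honk : Orthonormal ℝ (fun a : Fin k => w (Sum.inl a)) := by
    rw [orthonormal_iff_ite]
    intro a b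
    rw [hinnerW]
    have := congrFun (congrFun hblock a) b
    simpa [Matrix.one_apply] using this
  have hkr : k ≤ r := by
    have := honk.linearIndependent.fintype_card_le_finrank
    simpa [hWrank] using this
  -- extend to an orthonormal basis of W
  let v : Fin r → W := fun i => if h : (i : ℕ) < k then w (Sum.inl ⟨i, h⟩) else 0
  have hv : Orthonormal ℝ (Set.restrict {i : Fin r | (i : ℕ) < k} v) := by
    rw [orthonormal_iff_ite]
    rintro ⟨i, hi⟩ ⟨j, hj⟩
    have hi' : (i : ℕ) < k := hi
    have hj' : (j : ℕ) < k := hj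
    change inner ℝ (v i) (v j) = _
    simp only [v]
    rw [dif_pos hi', dif_pos hj', hinnerW]
    have hXij := congrFun (congrFun hblock ⟨i, hi'⟩) ⟨j, hj'⟩
    simp only [Matrix.submatrix_apply] at hXij
    rw [hXij]
    simp [Matrix.one_apply, Fin.ext_iff, Subtype.ext_iff]
  obtain ⟨b, hb⟩ := hv.exists_orthonormalBasis_extension_of_card_eq
    (by simp only [Fintype.card_fin, hWrank])
  -- the coordinate matrix
  let B : Matrix (Fin k ⊕ Fin nk) (Fin r) ℝ := fun i j => inner ℝ (b j) (w i)
  have hB : ∀ i i', ∑ j, B i j * B i' j = X i i' := by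
    intro i i'
    have h := b.sum_inner_mul_inner (w i) (w i')
    calc ∑ j, B i j * B i' j = ∑ j, (inner ℝ (w i) (b j) : ℝ) * inner ℝ (b j) (w i') := by
          refine Finset.sum_congr rfl fun j _ => ?_
          rw [show B i j = inner ℝ (b j) (w i) from rfl,
            show B i' j = inner ℝ (b j) (w i') from rfl, real_inner_comm (b j) (w i)]
      _ = inner ℝ (w i) (w i') := h
      _ = X i i' := hinnerW i i'
  have hBl : ∀ (a : Fin k) (j : Fin r), B (Sum.inl a) j = if (a : ℕ) = (j : ℕ) then 1 else 0 := by
    intro a j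
    have har : (a : ℕ) < r := lt_of_lt_of_le a.2 hkr
    have haj : ((⟨a, har⟩ : Fin r) : ℕ) < k := a.2
    have h1 : b ⟨a, har⟩ = w (Sum.inl a) := by
      rw [hb _ haj]
      simp [v, dif_pos haj]
    have h2 : (inner ℝ (b j) (b ⟨a, har⟩) : ℝ) = if j = ⟨a, har⟩ then 1 else 0 :=
      orthonormal_iff_ite.mp b.orthonormal j _
    rw [show B (Sum.inl a) j = inner ℝ (b j) (w (Sum.inl a)) from rfl, ← h1, h2]
    simp [Fin.ext_iff, eq_comm]
  refine ⟨fun x j => B (Sum.inr x) j, ?_⟩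
  have hRB : Rhat k (fun x j => B (Sum.inr x) j) = B := by
    ext i j
    cases i with
    | inl a => simp [Rhat, Ikr, hBl a j]
    | inr x => simp [Rhat]
  rw [hRB]
  ext i i'
  rw [Matrix.mul_apply]
  simp only [Matrix.transpose_apply]
  exact (hB i i').symm

end
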